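/- arXiv:2512.10792 — 5 statements merged into one kernel-verified Lean document; each statement's English description precedes it below -/
import Mathlib

section
/- Assume g i > 0 for all i : Fin m, the graph is connected, and B ⊆ Fin n is a nonempty set of boundary vertices. Then for every boundary datum p̄ : Fin n → ℝ there exists a unique P : Fin n → ℝ such that P j = p̄ j for all j ∈ B and (L P) j = 0 for all j ∉ B, where L = Cᵀ · diag(g) · C. -/
open Matrix

/-- Oriented incidence matrix of a finite oriented graph given by source and
target maps `s t : Fin m → Fin n`. -/
def incidenceMatrix (n m : ℕ) (s t : Fin m → Fin n) : Matrix (Fin m) (Fin n) ℝ :=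
  fun i j => if j = t i then 1 else if j = s i then -1 else 0

/-- Two vertices are adjacent if some edge has them as its endpoints
(ignoring orientation). -/
def Adj (n m : ℕ) (s t : Fin m → Fin n) (a b : Fin n) : Prop :=
  ∃ i : Fin m, (s i = a ∧ t i = b) ∨ (s i = b ∧ t i = a)

/-- The graph is connected if any two vertices are joined by a finite chain of
adjacent vertices. -/
def GraphConnected (n m : ℕ) (s t : Fin m → Fin n) : Prop :=
  ∀ a b : Fin n, Relation.ReflTransGen (Adj n m s t) a b

lemma incidence_mulVec (n m : ℕ) (s t : Fin m → Fin n) (hst : ∀ i, s i ≠ t i)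
    (v : Fin n → ℝ) (i : Fin m) :
    (incidenceMatrix n m s t).mulVec v i = v (t i) - v (s i) := by
  simp only [incidenceMatrix, mulVec, dotProduct]
  have : ∀ j, (if j = t i then (1:ℝ) else if j = s i then -1 else 0) * v j
      = (if j = t i then v j else 0) - (if j = s i then v j else 0) := by
    intro j
    by_cases h1 : j = t i
    · subst h1
      rw [if_pos rfl, if_pos rfl, if_neg (fun h => hst i h.symm)]
      ring
    · rw [if_neg h1, if_neg h1]
      by_cases h2 : j = s i <;> simp [h2]
  simp_rw [this, Finset.sum_sub_distrib, Finset.sum_ite_eq' Finset.univ,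
    Finset.mem_univ, if_true]

lemma key_zero (n m : ℕ) (s t : Fin m → Fin n) (hst : ∀ i, s i ≠ t i)
    (g : Fin m → ℝ) (hg : ∀ i, 0 < g i) (hconn : GraphConnected n m s t)
    (B : Set (Fin n)) (hB : B.Nonempty) (v : Fin n → ℝ)
    (hvB : ∀ j ∈ B, v j = 0)
    (hharm : ∀ j ∉ B, ((incidenceMatrix n m s t)ᵀ * Matrix.diagonal g *
        incidenceMatrix n m s t).mulVec v j = 0) : v = 0 := by
  classical
  set C := incidenceMatrix n m s t with hC
  set L := Cᵀ * Matrix.diagonal g * C with hL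
  have hdot0 : v ⬝ᵥ L.mulVec v = 0 := by
    simp only [dotProduct]
    apply Finset.sum_eq_zero
    intro j _
    by_cases hj : j ∈ B
    · rw [hvB j hj]; ring
    · rw [hharm j hj]; ring
  have hdot : v ⬝ᵥ L.mulVec v = ∑ i, g i * (C.mulVec v i)^2 := by
    rw [hL, ← mulVec_mulVec, ← mulVec_mulVec, dotProduct_mulVec, vecMul_transpose]
    simp only [dotProduct, mulVec_diagonal]
    exact Finset.sum_congr rfl fun i _ => by ring
  have hsum : ∑ i, g i * (C.mulVec v i)^2 = 0 := by rw [← hdot, hdot0]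
  have hterm : ∀ i, C.mulVec v i = 0 := by
    intro i
    have h0 : g i * (C.mulVec v i)^2 = 0 := by
      have := (Finset.sum_eq_zero_iff_of_nonneg
        (fun i _ => mul_nonneg (hg i).le (sq_nonneg _))).mp hsum i (Finset.mem_univ i)
      exact this
    have := (mul_eq_zero.mp h0).resolve_left (hg i).ne'
    exact pow_eq_zero_iff (n := 2) (by norm_num) |>.mp this
  have hedge : ∀ i, v (s i) = v (t i) := by
    intro i
    have := hterm i
    rw [incidence_mulVec n m s t hst v i] at this
    linarith
  have hconst : ∀ a b : Fin n, v a = v b := by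
    intro a b
    induction hconn a b with
    | refl => rfl
    | tail _ hadj ih =>
      obtain ⟨i, hi | hi⟩ := hadj
      · rw [ih, ← hi.1, ← hi.2, hedge i]
      · rw [ih, ← hi.1, ← hi.2, hedge i]
  obtain ⟨b0, hb0⟩ := hB
  funext j
  rw [Pi.zero_apply, hconst j b0, hvB b0 hb0]

/-- Well-posedness of the discrete Dirichlet problem: for positive conductances,
a connected graph and a nonempty boundary set `B`, every boundary datum admits a
unique extension `P` that is "discretely harmonic" off `B`. -/
theorem discrete_dirichlet_existence_uniqueness (n m : ℕ) (s t : Fin m → Fin n)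
    (hst : ∀ i, s i ≠ t i) (g : Fin m → ℝ) (hg : ∀ i, 0 < g i)
    (hconn : GraphConnected n m s t) (B : Set (Fin n)) (hB : B.Nonempty)
    (pbar : Fin n → ℝ) :
    ∃! P : Fin n → ℝ,
      (∀ j ∈ B, P j = pbar j) ∧
      (∀ j ∉ B, ((incidenceMatrix n m s t)ᵀ * Matrix.diagonal g *
          incidenceMatrix n m s t).mulVec P j = 0) := by
  classical
  set C := incidenceMatrix n m s t with hCdef
  set L := Cᵀ * Matrix.diagonal g * C with hLdef
  -- extension of interior data by zero
  let E : ({j : Fin n // j ∉ B} → ℝ) → (Fin n → ℝ) :=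
    fun x k => if h : k ∉ B then x ⟨k, h⟩ else 0
  have hEadd : ∀ x y, E (x + y) = E x + E y := by
    intro x y; funext k; simp only [E, Pi.add_apply]
    by_cases h : k ∉ B <;> simp [h]
  have hEsmul : ∀ (c : ℝ) x, E (c • x) = c • E x := by
    intro c x; funext k; simp only [E, Pi.smul_apply, smul_eq_mul]
    by_cases h : k ∉ B <;> simp [h]
  let A : ({j : Fin n // j ∉ B} → ℝ) →ₗ[ℝ] ({j : Fin n // j ∉ B} → ℝ) :=
    { toFun := fun x j => L.mulVec (E x) j.1
      map_add' := by
        intro x y; funext j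
        simp only [hEadd, mulVec_add, Pi.add_apply]
      map_smul' := by
        intro c x; funext j
        simp only [hEsmul, mulVec_smul, Pi.smul_apply, RingHom.id_apply] }
  have hAinj : Function.Injective A := by
    rw [← LinearMap.ker_eq_bot, LinearMap.ker_eq_bot']
    intro x hx
    have hvB : ∀ j ∈ B, E x j = 0 := by
      intro j hj; simp only [E]; rw [dif_neg (not_not_intro hj)]
    have hharm : ∀ j ∉ B, L.mulVec (E x) j = 0 := by
      intro j hj
      have := congrFun hx ⟨j, hj⟩
      exact this
    have h0 : E x = 0 := key_zero n m s t hst g hg hconn B hB (E x) hvB hharm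
    funext j
    have := congrFun h0 j.1
    simp only [E, dif_pos j.2] at this; exact this
  have hAsurj : Function.Surjective A :=
    (LinearMap.injective_iff_surjective).mp hAinj
  -- particular candidate: boundary data extended by zero
  let P0 : Fin n → ℝ := fun k => if k ∈ B then pbar k else 0
  obtain ⟨x, hx⟩ := hAsurj (fun j => -(L.mulVec P0 j.1))
  refine ⟨P0 + E x, ⟨?_, ?_⟩, ?_⟩
  · intro j hj
    simp only [Pi.add_apply, P0, E, if_pos hj, dif_neg (not_not_intro hj), add_zero]
  · intro j hj
    have := congrFun hx ⟨j, hj⟩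
    simp only [A, LinearMap.coe_mk, AddHom.coe_mk] at this
    rw [mulVec_add, Pi.add_apply, this]
    ring
  · rintro Q ⟨hQB, hQharm⟩
    have hvB : ∀ j ∈ B, (Q - (P0 + E x)) j = 0 := by
      intro j hj
      simp only [Pi.sub_apply, Pi.add_apply, hQB j hj, P0, E, if_pos hj,
        dif_neg (not_not_intro hj)]
      ring
    have hharm : ∀ j ∉ B, L.mulVec (Q - (P0 + E x)) j = 0 := by
      intro j hj
      rw [mulVec_sub, Pi.sub_apply, hQharm j hj]
      have := congrFun hx ⟨j, hj⟩
      simp only [A, LinearMap.coe_mk, AddHom.coe_mk] at this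
      rw [mulVec_add, Pi.add_apply, this]
      ring
    have h0 := key_zero n m s t hst g hg hconn B hB _ hvB hharm
    funext j
    have := congrFun h0 j
    simp only [Pi.sub_apply, Pi.zero_apply] at this
    linarith [this]
end

section
/- Discrete maximum principle: assume g i > 0 for all i : Fin m, the graph is connected, and B ⊆ Fin n is nonempty. If P : Fin n → ℝ satisfies (L P) j = 0 for all j ∉ B, where L = Cᵀ · diag(g) · C, then for every vertex k, min over j ∈ B of P j ≤ P k ≤ max over j ∈ B of P j. -/
open Matrix

lemma dmp_rowsum (n m : ℕ) (s t : Fin m → Fin n) (hst : ∀ i, s i ≠ t i)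
    (P : Fin n → ℝ) (i : Fin m) :
    (incidenceMatrix n m s t *ᵥ P) i = P (t i) - P (s i) := by
  have key : ∀ k, incidenceMatrix n m s t i k * P k =
      (if k = t i then P k else 0) - (if k = s i then P k else 0) := by
    intro k
    by_cases h1 : k = t i <;> by_cases h2 : k = s i <;>
      simp [incidenceMatrix, h1, h2, hst i, (hst i).symm]
  simp only [mulVec, dotProduct, key, Finset.sum_sub_distrib,
    Finset.sum_ite_eq', Finset.mem_univ, if_true]

lemma dmp_Lform (n m : ℕ) (s t : Fin m → Fin n) (hst : ∀ i, s i ≠ t i)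
    (g : Fin m → ℝ) (P : Fin n → ℝ) (j : Fin n) :
    ((incidenceMatrix n m s t)ᵀ * Matrix.diagonal g *
        incidenceMatrix n m s t).mulVec P j =
      ∑ i, incidenceMatrix n m s t i j * (g i * (P (t i) - P (s i))) := by
  rw [← mulVec_mulVec, ← mulVec_mulVec]
  have h1 : Matrix.diagonal g *ᵥ (incidenceMatrix n m s t *ᵥ P) =
      fun i => g i * (P (t i) - P (s i)) := by
    funext i
    rw [mulVec_diagonal, dmp_rowsum n m s t hst]
  rw [h1]
  simp [mulVec, dotProduct, transpose_apply]

lemma dmp_upper (n m : ℕ) (s t : Fin m → Fin n)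
    (hst : ∀ i, s i ≠ t i) (g : Fin m → ℝ) (hg : ∀ i, 0 < g i)
    (hconn : GraphConnected n m s t) (B : Finset (Fin n)) (hB : B.Nonempty)
    (P : Fin n → ℝ)
    (hP : ∀ j ∉ B, ((incidenceMatrix n m s t)ᵀ * Matrix.diagonal g *
        incidenceMatrix n m s t).mulVec P j = 0) :
    ∀ k : Fin n, P k ≤ B.sup' hB P := by
  have hne : (Finset.univ : Finset (Fin n)).Nonempty := ⟨hB.choose, Finset.mem_univ _⟩
  set M := Finset.univ.sup' hne P with hM
  have hle : ∀ x, P x ≤ M := fun x => Finset.le_sup' P (Finset.mem_univ x)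
  have maxprop : ∀ j, j ∉ B → P j = M → ∀ w, Adj n m s t j w → P w = M := by
    intro j hjB hPj w hadj
    have h0 := hP j hjB
    rw [dmp_Lform n m s t hst] at h0
    have hnonneg : ∀ i ∈ Finset.univ,
        0 ≤ incidenceMatrix n m s t i j * (g i * (P (t i) - P (s i))) := by
      intro i _
      by_cases h1 : j = t i
      · have hts : P (s i) ≤ P (t i) := by rw [← h1, hPj]; exact hle _
        have hc : incidenceMatrix n m s t i j = 1 := by simp [incidenceMatrix, h1]
        rw [hc]
        nlinarith [hg i]
      · by_cases h2 : j = s i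
        · have hts : P (t i) ≤ P (s i) := by rw [← h2, hPj]; exact hle _
          have hc : incidenceMatrix n m s t i j = -1 := by
            simp [incidenceMatrix, h1, h2, hst i]
          rw [hc]
          nlinarith [hg i]
        · simp [incidenceMatrix, h1, h2]
    have hzero : ∀ i ∈ Finset.univ,
        incidenceMatrix n m s t i j * (g i * (P (t i) - P (s i))) = 0 :=
      (Finset.sum_eq_zero_iff_of_nonneg hnonneg).1 h0
    obtain ⟨i, hi⟩ := hadj
    have hz := hzero i (Finset.mem_univ i)
    have hdiff : P (t i) - P (s i) = 0 := by
      rcases hi with ⟨hsi, hti⟩ | ⟨hsi, hti⟩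
      · have hjt : j ≠ t i := by rw [← hsi]; exact hst i
        have hc : incidenceMatrix n m s t i j = -1 := by
          simp [incidenceMatrix, hjt, ← hsi, hst i]
        rw [hc] at hz
        have h' : g i * (P (t i) - P (s i)) = 0 := by linarith
        rcases mul_eq_zero.1 h' with h | h
        · exact absurd h (ne_of_gt (hg i))
        · exact h
      · have hc : incidenceMatrix n m s t i j = 1 := by
          simp [incidenceMatrix, ← hti]
        rw [hc] at hz
        have h' : g i * (P (t i) - P (s i)) = 0 := by linarith
        rcases mul_eq_zero.1 h' with h | h
        · exact absurd h (ne_of_gt (hg i))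
        · exact h
    rcases hi with ⟨hsi, hti⟩ | ⟨hsi, hti⟩
    · rw [hsi, hPj] at hdiff
      rw [← hti]; linarith
    · rw [hti, hPj, hsi] at hdiff
      linarith
  obtain ⟨v, _, hv⟩ := Finset.exists_mem_eq_sup' hne P
  obtain ⟨b, hb⟩ := id hB
  have reach : ∀ a, Relation.ReflTransGen (Adj n m s t) a b → P a = M →
      ∃ c ∈ B, P c = M := by
    intro a hab
    induction hab using Relation.ReflTransGen.head_induction_on with
    | refl => intro h; exact ⟨b, hb, h⟩
    | head hadj _ ih =>
      intro hPa
      rename_i x y _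
      by_cases hmem : x ∈ B
      · exact ⟨x, hmem, hPa⟩
      · exact ih (maxprop x hmem hPa y hadj)
  obtain ⟨c, hcB, hcM⟩ := reach v (hconn v b) hv.symm
  intro k
  calc P k ≤ M := hle k
    _ = P c := hcM.symm
    _ ≤ B.sup' hB P := Finset.le_sup' P hcB

/-- Discrete maximum principle: a vector that is discretely harmonic off the
boundary set `B` attains its extrema on `B`. -/
theorem discrete_maximum_principle (n m : ℕ) (s t : Fin m → Fin n)
    (hst : ∀ i, s i ≠ t i) (g : Fin m → ℝ) (hg : ∀ i, 0 < g i)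
    (hconn : GraphConnected n m s t) (B : Finset (Fin n)) (hB : B.Nonempty)
    (P : Fin n → ℝ)
    (hP : ∀ j ∉ B, ((incidenceMatrix n m s t)ᵀ * Matrix.diagonal g *
        incidenceMatrix n m s t).mulVec P j = 0) :
    ∀ k : Fin n, B.inf' hB P ≤ P k ∧ P k ≤ B.sup' hB P := by
  intro k
  refine ⟨?_, dmp_upper n m s t hst g hg hconn B hB P hP k⟩
  have hPneg : ∀ j ∉ B, ((incidenceMatrix n m s t)ᵀ * Matrix.diagonal g *
      incidenceMatrix n m s t).mulVec (-P) j = 0 := by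
    intro j hj
    rw [mulVec_neg]
    simp [hP j hj]
  have h := dmp_upper n m s t hst g hg hconn B hB (-P) hPneg k
  obtain ⟨j0, hj0, hs⟩ := Finset.exists_mem_eq_sup' hB (-P)
  rw [hs] at h
  have : P j0 ≤ P k := by simpa using h
  exact le_trans (Finset.inf'_le P hj0) this
end

section
/- A priori flow bound: assume R i > 0 for all i : Fin m, the graph is connected, and B ⊆ Fin n is nonempty. If P : Fin n → ℝ satisfies (L P) j = 0 for all j ∉ B with L = Cᵀ · diag(fun i => 1 / R i) · C, and the edge flows are given by Poiseuille's law Q i = (P (s i) − P (t i)) / R i, then for every edge i, |Q i| ≤ (max over j ∈ B of P j − min over j ∈ B of P j) / R i. -/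
open Matrix

lemma max_principle (n m : ℕ) (s t : Fin m → Fin n)
    (hst : ∀ i, s i ≠ t i) (R : Fin m → ℝ) (hR : ∀ i, 0 < R i)
    (hconn : GraphConnected n m s t) (B : Finset (Fin n)) (hB : B.Nonempty)
    (P : Fin n → ℝ)
    (hP : ∀ j ∉ B, ((incidenceMatrix n m s t)ᵀ *
        Matrix.diagonal (fun i => 1 / R i) *
        incidenceMatrix n m s t).mulVec P j = 0) :
    ∀ v, P v ≤ B.sup' hB P := by
  have hne : Nonempty (Fin n) := ⟨hB.choose⟩
  have hU : (Finset.univ : Finset (Fin n)).Nonempty := Finset.univ_nonempty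
  set M := Finset.univ.sup' hU P with hM
  have hle : ∀ v, P v ≤ M := fun v => Finset.le_sup' P (Finset.mem_univ v)
  -- row computation
  have hrow : ∀ i, ∑ k, incidenceMatrix n m s t i k * P k = P (t i) - P (s i) := by
    intro i
    have key : ∀ k, incidenceMatrix n m s t i k * P k =
        (if k = t i then P (t i) else 0) + (if k = s i then -P (s i) else 0) := by
      intro k
      unfold incidenceMatrix
      by_cases h1 : k = t i
      · have h2 : ¬ k = s i := fun h2 => hst i (h2.symm.trans h1)
        rw [if_pos h1, if_pos h1, if_neg h2]
        subst h1; ring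
      · rw [if_neg h1, if_neg h1]
        by_cases h2 : k = s i
        · rw [if_pos h2, if_pos h2]; subst h2; ring
        · rw [if_neg h2, if_neg h2]; ring
    rw [Finset.sum_congr rfl (fun k _ => key k), Finset.sum_add_distrib]
    simp [Finset.sum_ite_eq']
    ring
  -- the Laplacian row as an explicit sum
  have hsum : ∀ j ∉ B,
      ∑ i, incidenceMatrix n m s t i j * ((1 / R i) * (P (t i) - P (s i))) = 0 := by
    intro j hj
    have h := hP j hj
    rw [← Matrix.mulVec_mulVec, ← Matrix.mulVec_mulVec] at h
    simp only [Matrix.mulVec, dotProduct, Matrix.transpose_apply,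
      Matrix.diagonal_apply, ite_mul, zero_mul, Finset.sum_ite_eq,
      Finset.mem_univ, if_true] at h
    simp only [hrow] at h
    exact h
  -- neighbor propagation at a maximizer off the boundary
  have hprop : ∀ j ∉ B, P j = M → ∀ i : Fin m,
      (s i = j → P (t i) = M) ∧ (t i = j → P (s i) = M) := by
    intro j hj hjM
    have h0 := hsum j hj
    have hnn : ∀ i ∈ Finset.univ (α := Fin m),
        0 ≤ incidenceMatrix n m s t i j * ((1 / R i) * (P (t i) - P (s i))) := by
      intro i _
      unfold incidenceMatrix
      have hRi : (0:ℝ) < 1 / R i := one_div_pos.mpr (hR i)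
      by_cases h1 : j = t i
      · rw [if_pos h1]
        have hle' : P (s i) ≤ P (t i) := h1 ▸ hjM ▸ hle (s i)
        nlinarith
      · by_cases h2 : j = s i
        · rw [if_neg h1, if_pos h2]
          have hle' : P (t i) ≤ P (s i) := h2 ▸ hjM ▸ hle (t i)
          nlinarith
        · rw [if_neg h1, if_neg h2]; simp
    have hzero := (Finset.sum_eq_zero_iff_of_nonneg hnn).mp h0
    intro i
    have hz := hzero i (Finset.mem_univ i)
    have hRi : (0:ℝ) < 1 / R i := one_div_pos.mpr (hR i)
    constructor
    · intro hsi
      have h1 : ¬ j = t i := fun h1 => hst i (hsi.trans h1)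
      have h2 : j = s i := hsi.symm
      unfold incidenceMatrix at hz
      rw [if_neg h1, if_pos h2] at hz
      have heq : P (t i) - P (s i) = 0 := by
        rcases mul_eq_zero.mp hz with h | h
        · norm_num at h
        · rcases mul_eq_zero.mp h with h | h
          · exact absurd h (ne_of_gt hRi)
          · exact h
      have heq' : P (t i) = P (s i) := sub_eq_zero.mp heq
      rw [heq']
      exact h2 ▸ hjM
    · intro hti
      have h1 : j = t i := hti.symm
      unfold incidenceMatrix at hz
      rw [if_pos h1] at hz
      have heq : P (t i) - P (s i) = 0 := by
        rcases mul_eq_zero.mp hz with h | h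
        · norm_num at h
        · rcases mul_eq_zero.mp h with h | h
          · exact absurd h (ne_of_gt hRi)
          · exact h
      have heq' : P (t i) = P (s i) := sub_eq_zero.mp heq
      rw [← heq']
      exact h1 ▸ hjM
  -- there is a global maximizer
  obtain ⟨v0, -, hv0⟩ := Finset.exists_mem_eq_sup' hU P
  obtain ⟨b, hbB⟩ := id hB
  have key : ∀ a c : Fin n, Relation.ReflTransGen (Adj n m s t) a c →
      P a = M → (∃ x ∈ B, P x = M) ∨ P c = M := by
    intro a c h
    induction h with
    | refl => intro ha; exact Or.inr ha
    | @tail b' c' hab hadj ih =>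
      intro ha
      rcases ih ha with h | h
      · exact Or.inl h
      · by_cases hbB' : b' ∈ B
        · exact Or.inl ⟨b', hbB', h⟩
        · obtain ⟨i, hi | hi⟩ := hadj
          · exact Or.inr (hi.2 ▸ (hprop b' hbB' h i).1 hi.1)
          · exact Or.inr (hi.1 ▸ (hprop b' hbB' h i).2 hi.2)
  have hex : ∃ x ∈ B, P x = M := by
    rcases key v0 b (hconn v0 b) hv0.symm with h | h
    · exact h
    · exact ⟨b, hbB, h⟩
  obtain ⟨x, hx, hxM⟩ := hex
  intro v
  calc P v ≤ M := hle v
    _ = P x := hxM.symm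
    _ ≤ B.sup' hB P := Finset.le_sup' P hx

/-- A priori bound on the Poiseuille edge flows in terms of the spread of the
boundary pressures. -/
theorem flow_apriori_bound (n m : ℕ) (s t : Fin m → Fin n)
    (hst : ∀ i, s i ≠ t i) (R : Fin m → ℝ) (hR : ∀ i, 0 < R i)
    (hconn : GraphConnected n m s t) (B : Finset (Fin n)) (hB : B.Nonempty)
    (P : Fin n → ℝ)
    (hP : ∀ j ∉ B, ((incidenceMatrix n m s t)ᵀ *
        Matrix.diagonal (fun i => 1 / R i) *
        incidenceMatrix n m s t).mulVec P j = 0)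
    (Q : Fin m → ℝ) (hQ : ∀ i, Q i = (P (s i) - P (t i)) / R i) :
    ∀ i : Fin m, |Q i| ≤ (B.sup' hB P - B.inf' hB P) / R i := by
  have hmax := max_principle n m s t hst R hR hconn B hB P hP
  -- min principle by applying the max principle to -P
  have hP' : ∀ j ∉ B, ((incidenceMatrix n m s t)ᵀ *
      Matrix.diagonal (fun i => 1 / R i) *
      incidenceMatrix n m s t).mulVec (fun v => -P v) j = 0 := by
    intro j hj
    have : (fun v => -P v) = -P := rfl
    rw [this, Matrix.mulVec_neg]
    simp only [Pi.neg_apply, hP j hj, neg_zero]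
  have hmin' := max_principle n m s t hst R hR hconn B hB (fun v => -P v) hP'
  have hmin : ∀ v, B.inf' hB P ≤ P v := by
    intro v
    obtain ⟨w, hw, hweq⟩ := Finset.exists_mem_eq_sup' hB (fun w => -P w)
    have h1 : -P v ≤ -P w := hweq ▸ hmin' v
    have h2 : B.inf' hB P ≤ P w := Finset.inf'_le P hw
    linarith
  intro i
  rw [hQ i, abs_div, abs_of_pos (hR i)]
  have habs : |P (s i) - P (t i)| ≤ B.sup' hB P - B.inf' hB P := by
    rw [abs_sub_le_iff]
    constructor
    · linarith [hmax (s i), hmin (t i)]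
    · linarith [hmax (t i), hmin (s i)]
  exact (div_le_div_iff_of_pos_right (hR i)).mpr habs
end

section
/- Lower triangularity of the convection matrix under topological ordering: assume s i < t i (as elements of Fin n) for every edge i : Fin m. Then for any Q : Fin m → ℝ, the n × n matrix M = Cᵀ · diag(Q) · ⟦−C⟧ satisfies M j k = 0 whenever j < k; that is, M is lower triangular. -/
open Matrix

/-- Entrywise positive-part operator `⟦X⟧ i j = max (X i j) 0`. -/
def posPart {α β : Type*} (X : Matrix α β ℝ) : Matrix α β ℝ :=
  fun i j => max (X i j) 0

/-- Lower triangularity of the convection matrix under topological ordering of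
the vertices: if `s i < t i` for every edge, then
`M = Cᵀ ⬝ diag Q ⬝ ⟦-C⟧` has vanishing entries above the diagonal. -/
theorem convection_matrix_lower_triangular (n m : ℕ) (s t : Fin m → Fin n)
    (hst : ∀ i : Fin m, s i < t i) (Q : Fin m → ℝ) :
    ∀ j k : Fin n, j < k →
      ((incidenceMatrix n m s t)ᵀ * Matrix.diagonal Q *
        posPart (-(incidenceMatrix n m s t))) j k = 0 := by
  intro j k hjk
  simp only [Matrix.mul_apply, Matrix.transpose_apply, Matrix.diagonal_apply,
    Finset.sum_ite_eq, Finset.mem_univ, if_true]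
  apply Finset.sum_eq_zero
  intro i _
  rcases eq_or_ne k (t i) with hk | hk
  · have : max (-(incidenceMatrix n m s t) i k) 0 = 0 := by
      simp [incidenceMatrix, hk]
    rw [show _root_.posPart (-(incidenceMatrix n m s t)) i k = 0 from this, mul_zero]
  · rcases eq_or_ne k (s i) with hk2 | hk2
    · have hj : j ≠ t i := fun h => absurd (hst i) (by simp [← hk2, ← h]; exact hjk.le)
      have hj2 : j ≠ s i := fun h => hjk.ne (h.trans hk2.symm)
      simp [incidenceMatrix, hj, hj2]
    · have : max (-(incidenceMatrix n m s t) i k) 0 = 0 := by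
        simp [incidenceMatrix, hk, hk2]
      rw [show _root_.posPart (-(incidenceMatrix n m s t)) i k = 0 from this, mul_zero]
end

section
/- Unique solvability of the graph convection (plasma skimming) system: assume s i < t i (as elements of Fin n) for every edge i : Fin m, Q i > 0 for all i, and let O ⊆ Fin n be the outlet set such that every vertex k ∉ O has at least one outgoing edge (∃ i, s i = k) and every vertex k ∈ O has at least one incoming edge (∃ i, t i = k). Define N = Cᵀ · diag(Q) · ⟦−C⟧ − diag(d), where d k = ∑ over i of C i k * Q i if k ∈ O and d k = 0 otherwise. Then N is lower triangular with strictly negative diagonal entries, N is invertible, and for every b : Fin n → ℝ the system N · H* = b has a unique solution H* : Fin n → ℝ. -/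
open Matrix

/-- Unique solvability of the graph convection (plasma skimming) system:
under topological ordering, positive pseudo-fluxes and the stated outlet
conditions, the convection matrix `N` is lower triangular with strictly
negative diagonal, invertible, and the system `N ⬝ H* = b` is uniquely
solvable for every right-hand side. -/
theorem convection_system_unique_solvability (n m : ℕ) (s t : Fin m → Fin n)
    (hst : ∀ i : Fin m, s i < t i) (Q : Fin m → ℝ) (hQ : ∀ i, 0 < Q i)
    (O : Finset (Fin n))
    (hout : ∀ k : Fin n, k ∉ O → ∃ i : Fin m, s i = k)
    (hin : ∀ k ∈ O, ∃ i : Fin m, t i = k) :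
    let C := incidenceMatrix n m s t
    let d : Fin n → ℝ := fun k =>
      if k ∈ O then ∑ i : Fin m, C i k * Q i else 0
    let N := Cᵀ * Matrix.diagonal Q * posPart (-C) - Matrix.diagonal d
    (∀ j k : Fin n, j < k → N j k = 0) ∧
    (∀ k : Fin n, N k k < 0) ∧
    IsUnit N ∧
    (∀ b : Fin n → ℝ, ∃! Hstar : Fin n → ℝ, N.mulVec Hstar = b) := by
  intro C d N
  have hne : ∀ i, s i ≠ t i := fun i => (hst i).ne
  have hCt : ∀ i, C i (t i) = 1 := by
    intro i; show incidenceMatrix n m s t i (t i) = 1; simp [incidenceMatrix]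
  have hCs : ∀ i, C i (s i) = -1 := by
    intro i; show incidenceMatrix n m s t i (s i) = -1
    simp [incidenceMatrix, hne i]
  have hC0 : ∀ i k, k ≠ t i → k ≠ s i → C i k = 0 := by
    intro i k h1 h2; show incidenceMatrix n m s t i k = 0
    simp [incidenceMatrix, h1, h2]
  -- entry formula
  have hN : ∀ j k : Fin n, N j k =
      (∑ i : Fin m, C i j * Q i * (if k = s i then 1 else 0))
        - (if j = k then d j else 0) := by
    intro j k
    show (Cᵀ * Matrix.diagonal Q * posPart (-C)) j k - Matrix.diagonal d j k = _
    rw [Matrix.diagonal_apply, Matrix.mul_apply]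
    congr 1
    refine Finset.sum_congr rfl fun i _ => ?_
    rw [Matrix.mul_diagonal, Matrix.transpose_apply]
    congr 1
    show max (-(C i k)) 0 = _
    by_cases h : k = s i
    · subst h; rw [hCs]; norm_num
    · simp only [if_neg h]
      by_cases h2 : k = t i
      · subst h2; rw [hCt]; norm_num
      · rw [hC0 i k h2 h]; norm_num
  -- simplified sum in first part
  have hsum : ∀ j k : Fin n,
      (∑ i : Fin m, C i j * Q i * (if k = s i then 1 else 0))
        = ∑ i : Fin m, (if k = s i then C i j * Q i else 0) := by
    intro j k
    refine Finset.sum_congr rfl fun i _ => ?_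
    by_cases h : k = s i <;> simp [h]
  have htri : ∀ j k : Fin n, j < k → N j k = 0 := by
    intro j k hjk
    rw [hN, hsum, if_neg hjk.ne, sub_zero]
    refine Finset.sum_eq_zero fun i _ => ?_
    by_cases h : k = s i
    · rw [if_pos h]
      have hjs : j ≠ s i := fun hh => hjk.ne (hh.trans h.symm)
      have hjt : j ≠ t i := by
        intro hh
        have : k < j := by rw [hh, h]; exact hst i
        exact absurd hjk (not_lt.mpr this.le)
      rw [hC0 i j hjt hjs, zero_mul]
    · rw [if_neg h]
  -- diagonal formula
  have hdiag : ∀ k : Fin n, N k k =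
      (∑ i : Fin m, (if k = s i then -Q i else 0)) - d k := by
    intro k
    rw [hN, hsum, if_pos rfl]
    congr 1
    refine Finset.sum_congr rfl fun i _ => ?_
    by_cases h : k = s i
    · subst h; rw [if_pos rfl, if_pos rfl, hCs]; ring
    · simp [h]
  have hdsplit : ∀ k : Fin n, (∑ i : Fin m, C i k * Q i)
      = (∑ i : Fin m, (if k = t i then Q i else 0))
        + (∑ i : Fin m, (if k = s i then -Q i else 0)) := by
    intro k
    rw [← Finset.sum_add_distrib]
    refine Finset.sum_congr rfl fun i _ => ?_
    by_cases h : k = t i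
    · have : k ≠ s i := by rw [h]; exact (hne i).symm
      subst h; rw [hCt]; simp [this]
    · by_cases h2 : k = s i
      · subst h2; rw [hCs]; simp [h]
      · rw [hC0 i k h h2]; simp [h, h2]
  have hneg : ∀ k : Fin n, N k k < 0 := by
    intro k
    rw [hdiag]
    by_cases hk : k ∈ O
    · show _ - d k < 0
      have hd : d k = ∑ i : Fin m, C i k * Q i := if_pos hk
      rw [hd, hdsplit]
      have : (∑ i : Fin m, (if k = s i then -Q i else 0))
          - ((∑ i : Fin m, (if k = t i then Q i else 0))
            + (∑ i : Fin m, (if k = s i then -Q i else 0)))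
          = -(∑ i : Fin m, (if k = t i then Q i else 0)) := by ring
      rw [this, neg_lt, neg_zero]
      obtain ⟨i0, hi0⟩ := hin k hk
      refine Finset.sum_pos' (fun i _ => ?_) ⟨i0, Finset.mem_univ i0, ?_⟩
      · by_cases h : k = t i <;> simp [h, (hQ i).le]
      · rw [if_pos hi0.symm]; exact hQ i0
    · show _ - d k < 0
      have hd : d k = 0 := if_neg hk
      rw [hd, sub_zero, ← neg_pos, ← Finset.sum_neg_distrib]
      obtain ⟨i0, hi0⟩ := hout k hk
      refine Finset.sum_pos' (fun i _ => ?_) ⟨i0, Finset.mem_univ i0, ?_⟩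
      · by_cases h : k = s i <;> simp [h, (hQ i).le]
      · rw [if_pos hi0.symm]; norm_num; exact hQ i0
  -- determinant
  have hBT : Nᵀ.BlockTriangular id := by
    intro i j hij
    exact htri j i hij
  have hdet : N.det ≠ 0 := by
    rw [← Matrix.det_transpose, Matrix.det_of_upperTriangular hBT]
    exact Finset.prod_ne_zero_iff.mpr fun k _ => (hneg k).ne
  have hdu : IsUnit N.det := isUnit_iff_ne_zero.mpr hdet
  have hU : IsUnit N := (Matrix.isUnit_iff_isUnit_det N).mpr hdu
  refine ⟨htri, hneg, hU, fun b => ⟨N⁻¹.mulVec b, ?_, ?_⟩⟩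
  · show N.mulVec (N⁻¹.mulVec b) = b
    rw [Matrix.mulVec_mulVec, Matrix.mul_nonsing_inv _ hdu, Matrix.one_mulVec]
  · intro y hy
    rw [← hy, Matrix.mulVec_mulVec, Matrix.nonsing_inv_mul _ hdu, Matrix.one_mulVec]
end
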